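/- Let f : Z_1 × ⋯ × Z_n → ℝ have the bounded differences property with constants L_1,…,L_n < ∞: |f(z_1,…,z_ℓ,…,z_n) − f(z_1,…,z_ℓ',…,z_n)| ≤ L_ℓ for all choices of coordinates and all ℓ ∈ [n]. Then for any independent random variables Z_1,…,Z_n (with f(Z_1,…,Z_n) measurable and integrable) and any t ∈ ℝ, E exp(t ( f(Z_1,…,Z_n) − E f(Z_1,…,Z_n) )) ≤ exp( (t²/8) Σ_{ℓ=1}^n L_ℓ² ). -/

import Mathlib

open MeasureTheory
open scoped ENNReal NNReal BigOperators RealInnerProductSpace Classical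

noncomputable section

/-- Empirical quantile of the finite family `f` at level `q`:
`inf { r : ℝ | (1/|A|) ∑_{a∈A} 1{f a ≤ r} ≥ q }`. -/
def empQuantile {ι : Type*} [Fintype ι] (q : ℝ) (f : ι → ℝ) : ℝ :=
  sInf {r : ℝ | q ≤ (Finset.univ.filter fun a => f a ≤ r).card / (Fintype.card ι : ℝ)}

/-- Unbiased estimator of the squared MMD. -/
def mmdSqHat {X : Type*} (k : X → X → ℝ) {n m : ℕ} (x : Fin n → X) (y : Fin m → X) : ℝ :=
  (1 / ((n : ℝ) * ((n : ℝ) - 1))) * ∑ i : Fin n, ∑ i' : Fin n,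
      (if i ≠ i' then k (x i) (x i') else 0)
    + (1 / ((m : ℝ) * ((m : ℝ) - 1))) * ∑ j : Fin m, ∑ j' : Fin m,
      (if j ≠ j' then k (y j) (y j') else 0)
    - (2 / ((m : ℝ) * (n : ℝ))) * ∑ i : Fin n, ∑ j : Fin m, k (x i) (y j)

/-- Population squared MMD:
`∫∫ k dp dp + ∫∫ k dq dq − 2 ∫∫ k dp dq`. -/
def mmdSq {X : Type*} [MeasurableSpace X] (k : X → X → ℝ) (p q : Measure X) : ℝ :=
  (∫ x, ∫ x', k x x' ∂p ∂p) + (∫ y, ∫ y', k y y' ∂q ∂q) - 2 * (∫ x, ∫ y, k x y ∂q ∂p)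

/-- First `n` entries of a combined sample. -/
def xPart {X : Type*} (n m : ℕ) (z : Fin (n + m) → X) : Fin n → X := fun i => z (Fin.castAdd m i)

/-- Last `m` entries of a combined sample. -/
def yPart {X : Type*} (n m : ℕ) (z : Fin (n + m) → X) : Fin m → X := fun j => z (Fin.natAdd n j)

/-- The normaliser `N̂_k(z) = (1/(n(n−1))) ∑_{i≠j} k(z_i,z_j)²`. -/
def normHat {X : Type*} (k : X → X → ℝ) (n : ℕ) {N : ℕ} (z : Fin N → X) : ℝ :=
  (1 / ((n : ℝ) * ((n : ℝ) - 1))) * ∑ i : Fin N, ∑ j : Fin N,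
    (if i ≠ j then (k (z i) (z j)) ^ 2 else 0)

/-- The MMD-FUSE-1 statistic. -/
def fuse1Stat {X Θ : Type*} [MeasurableSpace Θ] (k : Θ → X → X → ℝ) (π : Measure Θ)
    (lam : ℝ) (n m : ℕ) (z : Fin (n + m) → X) : ℝ :=
  (1 / lam) * Real.log (∫ θ, Real.exp (lam * mmdSqHat (k θ) (xPart n m z) (yPart n m z)) ∂π)

/-- The MMD-FUSE-N statistic. -/
def fuseNStat {X Θ : Type*} [MeasurableSpace Θ] (k : Θ → X → X → ℝ) (π : Measure Θ)
    (lam : ℝ) (n m : ℕ) (z : Fin (n + m) → X) : ℝ :=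
  (1 / lam) * Real.log (∫ θ,
    Real.exp (lam * mmdSqHat (k θ) (xPart n m z) (yPart n m z) / Real.sqrt (normHat (k θ) n z)) ∂π)

/-- The uniform distribution on a finite nonempty type. -/
def uniformOn (G : Type*) [Fintype G] [Nonempty G] [MeasurableSpace G] : Measure G :=
  (PMF.uniformOfFintype G).toMeasure

instance uniformOn.instIsProbabilityMeasure (G : Type*) [Fintype G] [Nonempty G]
    [MeasurableSpace G] : IsProbabilityMeasure (uniformOn G) := by
  unfold uniformOn; infer_instance

instance (N : ℕ) : MeasurableSpace (Equiv.Perm (Fin N)) := ⊤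

/-- Real-valued KL divergence `∫ log(dρ/dπ) dρ` (meaningful when `ρ ≪ π` and the
integrand is `ρ`-integrable). -/
def klReal {Θ : Type*} [MeasurableSpace Θ] (ρ π : Measure Θ) : ℝ :=
  ∫ θ, Real.log ((ρ.rnDeriv π θ).toReal) ∂ρ

/-- The population FUSE-1 quantity `sup_ρ { MMD²(p,q;K_ρ) − KL(ρ‖π)/λ }`, the supremum
running over probability measures `ρ` with finite KL divergence to `π` (measures with
infinite KL contribute `−∞` and hence never enlarge the supremum). -/
def fuse1Pop {X Θ : Type*} [MeasurableSpace X] [MeasurableSpace Θ]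
    (k : Θ → X → X → ℝ) (π : Measure Θ) (lam : ℝ) (p q : Measure X) : ℝ :=
  sSup {x : ℝ | ∃ ρ : Measure Θ, IsProbabilityMeasure ρ ∧ ρ ≪ π ∧
    Integrable (fun θ => Real.log ((ρ.rnDeriv π θ).toReal)) ρ ∧
    x = mmdSq (fun a b => ∫ θ, k θ a b ∂ρ) p q - klReal ρ π / lam}

/-- Support of a measure on a topological measurable space: points all of whose open
neighbourhoods have positive measure. -/
def msupport {Θ : Type*} [TopologicalSpace Θ] [MeasurableSpace Θ] (π : Measure Θ) : Set Θ :=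
  {θ | ∀ U : Set Θ, IsOpen U → θ ∈ U → 0 < π U}

/-- The MMD two-sample U-statistic kernel. -/
def hker {X : Type*} (k : X → X → ℝ) (x x' y y' : X) : ℝ :=
  k x x' + k y y' - k x y' - k x' y

/-- The two-sample U-statistic `U(z)`. -/
def uStat {X : Type*} (k : X → X → ℝ) (n m : ℕ) (z : Fin (n + m) → X) : ℝ :=
  (1 / ((n : ℝ) * ((n : ℝ) - 1) * (m : ℝ) * ((m : ℝ) - 1))) *
    ∑ i : Fin n, ∑ i' : Fin n, ∑ j : Fin m, ∑ j' : Fin m,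
      if i ≠ i' ∧ j ≠ j' then
        hker k (z (Fin.castAdd m i)) (z (Fin.castAdd m i'))
          (z (Fin.natAdd n j)) (z (Fin.natAdd n j'))
      else 0

/-- The quantity `Ū(z)`. -/
def uBar {X : Type*} (k : X → X → ℝ) (n m : ℕ) (z : Fin (n + m) → X) : ℝ :=
  (1 / ((n : ℝ) * ((n : ℝ) - 1) * (m : ℝ) * ((m : ℝ) - 1))) *
    ⨆ σ : Equiv.Perm (Fin (n + m)),
      Real.sqrt (∑ i : Fin n, ∑ i' : Fin n,
        if i ≠ i' then
          (∑ j : Fin m, ∑ j' : Fin m,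
            if j ≠ j' then
              hker k (z (σ (Fin.castAdd m i))) (z (σ (Fin.castAdd m i')))
                (z (σ (Fin.natAdd n j))) (z (σ (Fin.natAdd n j')))
            else 0) ^ 2
        else 0)

/-- Frobenius norm of a real square matrix. -/
def matFrobNorm {n : ℕ} (A : Matrix (Fin n) (Fin n) ℝ) : ℝ :=
  Real.sqrt (∑ i, ∑ j, (A i j) ^ 2)

/-- ℓ²→ℓ² operator norm (largest singular value) of a real square matrix. -/
def matOpNorm {n : ℕ} (A : Matrix (Fin n) (Fin n) ℝ) : ℝ :=
  ‖LinearMap.toContinuousLinearMap (Matrix.toEuclideanLin A)‖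

end


section McDiarmidAux
open MeasureTheory Real


lemma hoeffding_fun_le (p : ℝ) (hp0 : 0 ≤ p) (hp1 : p ≤ 1) (x : ℝ) :
    (1 - p) + p * Real.exp x ≤ Real.exp (p * x + x ^ 2 / 8) := by
  set g : ℝ → ℝ := fun x => 1 - p + p * Real.exp x with hgdef
  have hg : ∀ y, 0 < g y := by
    intro y
    rcases lt_or_eq_of_le hp1 with h | h
    · have := Real.exp_pos y; simp only [hgdef]; nlinarith
    · simp only [hgdef, h]; simpa using Real.exp_pos y
  have hg' : ∀ y, HasDerivAt g (p * Real.exp y) y := by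
    intro y
    exact ((Real.hasDerivAt_exp y).const_mul p).const_add (1 - p)
  set φ : ℝ → ℝ := fun x => p * x + x ^ 2 / 8 - Real.log (g x) with hφdef
  set D : ℝ → ℝ := fun x => p + x / 4 - p * Real.exp x / g x with hDdef
  have hφ' : ∀ y, HasDerivAt φ (D y) y := by
    intro y
    have h1 : HasDerivAt (fun x : ℝ => p * x + x ^ 2 / 8) (p + y / 4) y := by
      have := ((hasDerivAt_id y).const_mul p).add ((hasDerivAt_pow 2 y).div_const 8)
      refine this.congr_deriv ?_
      simp; ring
    have h2 : HasDerivAt (fun x => Real.log (g x)) (p * Real.exp y / g y) y :=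
      (hg' y).log (hg y).ne'
    exact h1.sub h2
  have hD' : ∀ y, HasDerivAt D (1 / 4 - p * (1 - p) * Real.exp y / (g y) ^ 2) y := by
    intro y
    have hq : HasDerivAt (fun x => p * Real.exp x / g x)
        ((p * Real.exp y * g y - p * Real.exp y * (p * Real.exp y)) / (g y) ^ 2) y :=
      ((Real.hasDerivAt_exp y).const_mul p).div (hg' y) (hg y).ne'
    have h1 : HasDerivAt (fun x : ℝ => p + x / 4) (1 / 4) y := by
      simpa using ((hasDerivAt_id y).div_const 4).const_add p
    have := h1.sub hq
    refine this.congr_deriv ?_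
    have : g y = 1 - p + p * Real.exp y := rfl
    rw [this]; ring
  have hD'nonneg : ∀ y, 0 ≤ 1 / 4 - p * (1 - p) * Real.exp y / (g y) ^ 2 := by
    intro y
    have hgy := hg y
    have : p * (1 - p) * Real.exp y / (g y) ^ 2 ≤ 1 / 4 := by
      rw [div_le_iff₀ (by positivity)]
      have : g y = 1 - p + p * Real.exp y := rfl
      nlinarith [sq_nonneg (p * Real.exp y - (1 - p)), Real.exp_pos y]
    linarith
  have hDdiff : Differentiable ℝ D := fun y => (hD' y).differentiableAt
  have hDmono : Monotone D :=
    monotone_of_deriv_nonneg hDdiff (fun y => (hD' y).deriv ▸ hD'nonneg y)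
  have hD0 : D 0 = 0 := by
    have : g 0 = 1 := by simp [hgdef]
    simp [hDdef, this]
  have hφ0 : φ 0 = 0 := by
    have : g 0 = 1 := by simp [hgdef]
    simp [hφdef, this]
  have hφdiff : Differentiable ℝ φ := fun y => (hφ' y).differentiableAt
  have hφnonneg : ∀ y, 0 ≤ φ y := by
    intro y
    rcases le_total 0 y with hy | hy
    · have hmono : MonotoneOn φ (Set.Ici 0) := by
        refine monotoneOn_of_deriv_nonneg (convex_Ici 0) hφdiff.continuous.continuousOn hφdiff.differentiableOn
          (fun z hz => ?_)
        rw [(hφ' z).deriv, ← hD0]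
        exact hDmono (le_of_lt (by simpa using hz))
      have := hmono (Set.self_mem_Ici) (Set.mem_Ici.2 hy) hy
      rwa [hφ0] at this
    · have hanti : AntitoneOn φ (Set.Iic 0) := by
        refine antitoneOn_of_deriv_nonpos (convex_Iic 0) hφdiff.continuous.continuousOn hφdiff.differentiableOn
          (fun z hz => ?_)
        rw [(hφ' z).deriv, ← hD0]
        exact hDmono (le_of_lt (by simpa using hz))
      have := hanti (Set.mem_Iic.2 hy) (Set.self_mem_Iic) hy
      rwa [hφ0] at this
  have h := hφnonneg x
  have hlog : Real.log (g x) ≤ p * x + x ^ 2 / 8 := by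
    simp only [hφdef] at h; linarith
  calc (1 - p) + p * Real.exp x = g x := rfl
    _ = Real.exp (Real.log (g x)) := (Real.exp_log (hg x)).symm
    _ ≤ Real.exp (p * x + x ^ 2 / 8) := Real.exp_le_exp.2 hlog


lemma hoeffding_mgf {α : Type*} [MeasurableSpace α] (μ : Measure α) [IsProbabilityMeasure μ]
    (X : α → ℝ) (hX : Measurable X) (L : ℝ)
    (hL : ∀ x y, |X x - X y| ≤ L) (t : ℝ) :
    ∫ x, Real.exp (t * (X x - ∫ y, X y ∂μ)) ∂μ ≤ Real.exp (t ^ 2 * L ^ 2 / 8) := by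
  rcases isEmpty_or_nonempty α with hE | hNE
  · rw [integral_of_isEmpty]
    positivity
  obtain ⟨x₀⟩ := hNE
  have hL0 : 0 ≤ L := by simpa using hL x₀ x₀
  set a := sInf (Set.range X) with ha
  have hbdd : BddBelow (Set.range X) := by
    refine ⟨X x₀ - L, ?_⟩
    rintro _ ⟨x, rfl⟩
    have := (abs_le.1 (hL x x₀)).1
    linarith
  have hla : ∀ x, a ≤ X x := fun x => csInf_le hbdd ⟨x, rfl⟩
  have hub : ∀ x, X x ≤ a + L := by
    intro x
    have : X x - L ≤ a := by
      refine le_csInf ⟨X x₀, ⟨x₀, rfl⟩⟩ ?_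
      rintro _ ⟨z, rfl⟩
      have := (abs_le.1 (hL x z)).2
      linarith
    linarith
  have habs : ∀ x, |X x| ≤ |a| + L := fun x =>
    abs_le.2 ⟨by linarith [neg_abs_le a, hla x], by linarith [le_abs_self a, hub x]⟩
  have hXint : Integrable X μ :=
    Integrable.mono' (integrable_const (|a| + L)) hX.aestronglyMeasurable
      (Filter.Eventually.of_forall fun x => by simpa using habs x)
  set m := ∫ y, X y ∂μ with hm
  have ham : a ≤ m := by
    have := integral_mono (integrable_const a) hXint hla
    simpa using this
  have hmb : m ≤ a + L := by
    have := integral_mono hXint (integrable_const (a + L)) hub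
    simpa using this
  rcases eq_or_lt_of_le hL0 with hL0' | hLpos
  · -- L = 0
    have hXc : ∀ x, X x = a := fun x => le_antisymm (by linarith [hub x, hL0'.symm ▸ le_refl L]) (hla x)
    have hma : m = a := by
      rw [hm, integral_congr_ae (Filter.Eventually.of_forall hXc)]
      simp
    have : (fun x => Real.exp (t * (X x - m))) = fun _ => (1 : ℝ) := by
      funext x; rw [hXc x, hma]; simp
    rw [this]
    simp [Real.one_le_exp_iff]
    positivity
  -- main case
  set ea := Real.exp (t * a) with hea
  set eb := Real.exp (t * (a + L)) with heb
  have hconv : ∀ x, Real.exp (t * X x) ≤ ((a + L - X x) * ea + (X x - a) * eb) / L := by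
    intro x
    have hw1 : 0 ≤ (a + L - X x) / L := div_nonneg (by linarith [hub x]) hLpos.le
    have hw2 : 0 ≤ (X x - a) / L := div_nonneg (by linarith [hla x]) hLpos.le
    have hsum : (a + L - X x) / L + (X x - a) / L = 1 := by field_simp; ring
    have hcx := convexOn_exp.2 (Set.mem_univ (t * a)) (Set.mem_univ (t * (a + L)))
      hw1 hw2 hsum
    simp only [smul_eq_mul] at hcx
    have harg : (a + L - X x) / L * (t * a) + (X x - a) / L * (t * (a + L)) = t * X x := by
      field_simp; ring
    rw [harg] at hcx
    calc Real.exp (t * X x)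
        ≤ (a + L - X x) / L * ea + (X x - a) / L * eb := hcx
      _ = ((a + L - X x) * ea + (X x - a) * eb) / L := by ring
  -- integrability of the two sides
  have hexp_int : Integrable (fun x => Real.exp (t * X x)) μ := by
    refine Integrable.mono' (integrable_const (Real.exp (|t| * (|a| + L))))
      (Real.measurable_exp.comp (hX.const_mul t)).aestronglyMeasurable
      (Filter.Eventually.of_forall fun x => ?_)
    rw [Real.norm_eq_abs, abs_of_pos (Real.exp_pos _)]
    refine Real.exp_le_exp.2 ?_
    calc t * X x ≤ |t * X x| := le_abs_self _
      _ = |t| * |X x| := abs_mul _ _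
      _ ≤ |t| * (|a| + L) := by
          exact mul_le_mul_of_nonneg_left (habs x) (abs_nonneg t)
  have hrhs_int : Integrable (fun x => ((a + L - X x) * ea + (X x - a) * eb) / L) μ := by
    apply Integrable.div_const
    exact (((integrable_const (a + L)).sub hXint).mul_const ea).add
      ((hXint.sub (integrable_const a)).mul_const eb)
  have hmain : ∫ x, Real.exp (t * X x) ∂μ ≤ ((a + L - m) * ea + (m - a) * eb) / L := by
    have h1 := integral_mono hexp_int hrhs_int hconv
    have h2 : ∫ x, ((a + L - X x) * ea + (X x - a) * eb) / L ∂μ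
        = ((a + L - m) * ea + (m - a) * eb) / L := by
      have e1 : ∀ x : α, ((a + L - X x) * ea + (X x - a) * eb) / L
          = (((a + L) * ea - a * eb) + (eb - ea) * X x) / L := fun x => by ring
      simp_rw [e1]
      rw [integral_div, integral_add (integrable_const _) (hXint.const_mul _),
        integral_const, integral_const_mul]
      simp only [measure_univ, probReal_univ, ENNReal.toReal_one, one_smul, ← hm]
      ring
    rwa [h2] at h1
  -- apply the analytic lemma
  set p := (m - a) / L with hp
  have hp0 : 0 ≤ p := div_nonneg (by linarith) hLpos.le
  have hp1 : p ≤ 1 := by rw [hp, div_le_one hLpos]; linarith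
  have key := hoeffding_fun_le p hp0 hp1 (t * L)
  have hsplit : (fun x => Real.exp (t * (X x - m)))
      = fun x => Real.exp (t * X x) * Real.exp (-(t * m)) := by
    funext x; rw [← Real.exp_add]; ring_nf
  rw [hsplit, integral_mul_const]
  have hfac : ((a + L - m) * ea + (m - a) * eb) / L = ea * ((1 - p) + p * Real.exp (t * L)) := by
    rw [heb, hp]
    have : Real.exp (t * (a + L)) = ea * Real.exp (t * L) := by
      rw [hea, ← Real.exp_add]; ring_nf
    rw [this]
    field_simp
    ring
  have hstep : (∫ x, Real.exp (t * X x) ∂μ) * Real.exp (-(t * m))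
      ≤ (ea * ((1 - p) + p * Real.exp (t * L))) * Real.exp (-(t * m)) := by
    refine mul_le_mul_of_nonneg_right ?_ (Real.exp_pos _).le
    rw [← hfac]; exact hmain
  refine hstep.trans ?_
  have hstep2 : ea * ((1 - p) + p * Real.exp (t * L)) * Real.exp (-(t * m))
      ≤ ea * Real.exp (p * (t * L) + (t * L) ^ 2 / 8) * Real.exp (-(t * m)) := by
    refine mul_le_mul_of_nonneg_right
      (mul_le_mul_of_nonneg_left key (Real.exp_pos _).le) (Real.exp_pos _).le
  refine hstep2.trans (le_of_eq ?_)
  rw [hea, ← Real.exp_add, ← Real.exp_add]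
  congr 1
  rw [hp]
  field_simp
  ring


lemma integrable_of_abs_bound {α : Type*} [MeasurableSpace α] (μ : Measure α)
    [IsFiniteMeasure μ] (g : α → ℝ) (hg : Measurable g) (C : ℝ) (h : ∀ x, |g x| ≤ C) :
    Integrable g μ :=
  Integrable.mono' (integrable_const C) hg.aestronglyMeasurable
    (Filter.Eventually.of_forall fun x => by simpa using h x)

lemma insertNth_update {n : ℕ} {α : Fin (n + 1) → Type*} (p : Fin (n + 1)) (x : α p)
    (f : ∀ j, α (p.succAbove j)) (j : Fin n) (y : α (p.succAbove j)) :
    p.insertNth x (Function.update f j y)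
      = Function.update (p.insertNth x f) (p.succAbove j) y := by
  refine funext (Fin.succAboveCases p ?_ ?_)
  · rw [Fin.insertNth_apply_same,
      Function.update_of_ne (Fin.succAbove_ne p j).symm]
    rw [Fin.insertNth_apply_same]
  · intro i
    by_cases h : i = j
    · subst h
      rw [Fin.insertNth_apply_succAbove, Function.update_self, Function.update_self]
    · rw [Fin.insertNth_apply_succAbove,
        Function.update_of_ne h,
        Function.update_of_ne (fun hc => h (Fin.succAbove_right_injective hc)),
        Fin.insertNth_apply_succAbove]

lemma pi_mgf : ∀ (n : ℕ) (Z : Fin n → Type) (mZ : ∀ i, MeasurableSpace (Z i))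
    (ν : ∀ i, Measure (Z i)) (hν : ∀ i, IsProbabilityMeasure (ν i))
    (f : (∀ i, Z i) → ℝ) (hf : Measurable f) (C : ℝ) (hC : ∀ z, |f z| ≤ C)
    (L : Fin n → ℝ)
    (hbd : ∀ (ℓ : Fin n) (z : ∀ i, Z i) (z' : Z ℓ), |f z - f (Function.update z ℓ z')| ≤ L ℓ)
    (t : ℝ),
    ∫ z, Real.exp (t * (f z - ∫ z', f z' ∂(Measure.pi ν))) ∂(Measure.pi ν)
      ≤ Real.exp (t ^ 2 / 8 * ∑ ℓ, (L ℓ) ^ 2) := by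
  intro n
  induction n with
  | zero =>
    intro Z mZ ν hν f hf C hC L hbd t
    haveI : ∀ i, IsProbabilityMeasure (ν i) := hν
    haveI : IsProbabilityMeasure (Measure.pi ν) := inferInstance
    have hconst : ∀ z : (∀ i : Fin 0, Z i), f z = f (fun i => i.elim0) :=
      fun z => congrArg f (funext fun i => i.elim0)
    have hm : ∫ z', f z' ∂(Measure.pi ν) = f (fun i => i.elim0) := by
      rw [integral_congr_ae (Filter.Eventually.of_forall hconst)]; simp
    have : (fun z => Real.exp (t * (f z - ∫ z', f z' ∂(Measure.pi ν)))) = fun _ => (1 : ℝ) := by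
      funext z; rw [hconst z, hm]; simp
    rw [this]
    simp
  | succ n IH =>
    intro Z mZ ν hν f hf C hC L hbd t
    haveI : ∀ i, IsProbabilityMeasure (ν i) := hν
    set e := MeasurableEquiv.piFinSuccAbove Z 0 with he
    set ν' : ∀ j : Fin n, Measure (Z (Fin.succAbove 0 j)) := fun j => ν (Fin.succAbove 0 j)
      with hν'
    haveI : ∀ j, IsProbabilityMeasure (ν' j) := fun j => hν _
    have hmp : MeasurePreserving e (Measure.pi ν) ((ν 0).prod (Measure.pi ν')) :=
      measurePreserving_piFinSuccAbove ν 0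
    set m := ∫ z', f z' ∂(Measure.pi ν) with hm
    have habsm : |m| ≤ C := by
      rw [hm]
      calc |∫ z', f z' ∂(Measure.pi ν)| ≤ ∫ z', |f z'| ∂(Measure.pi ν) := by
            simpa [Real.norm_eq_abs] using
              norm_integral_le_integral_norm (f := fun z' => f z') (μ := Measure.pi ν)
        _ ≤ ∫ _z', C ∂(Measure.pi ν) := integral_mono
            (integrable_of_abs_bound _ _ (hf.abs) C (fun z => by simp [abs_abs, hC z]))
            (integrable_const C) hC
        _ = C := by simp
    -- transfer an integral over pi to the product
    have htrans : ∀ (g : (∀ i, Z i) → ℝ), Measurable g →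
        ∫ z, g z ∂(Measure.pi ν) = ∫ q, g (e.symm q) ∂((ν 0).prod (Measure.pi ν')) := by
      intro g hg
      rw [← (hmp.symm e).map_eq, integral_map e.symm.measurable.aemeasurable
        hg.aestronglyMeasurable]
    -- the conditional mean in the first coordinate
    set F : (∀ j : Fin n, Z (Fin.succAbove 0 j)) → ℝ :=
      fun y => ∫ x, f (e.symm (x, y)) ∂(ν 0) with hF
    have hesymm : ∀ q, e.symm q = Fin.insertNth 0 q.1 q.2 := fun q => rfl
    have hgmeas : Measurable (fun q : Z 0 × (∀ j : Fin n, Z (Fin.succAbove 0 j)) =>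
        f (e.symm q)) := hf.comp e.symm.measurable
    have hFmeas : Measurable F := by
      have := (hgmeas.stronglyMeasurable).integral_prod_left'
        (μ := ν 0)
      exact this.measurable
    have hFbd : ∀ y, |F y| ≤ C := by
      intro y
      calc |F y| ≤ ∫ x, |f (e.symm (x, y))| ∂(ν 0) := by
            simpa [Real.norm_eq_abs, hF] using
              norm_integral_le_integral_norm (f := fun x => f (e.symm (x, y))) (μ := ν 0)
        _ ≤ ∫ _x, C ∂(ν 0) := integral_mono
            (integrable_of_abs_bound _ _
              ((hf.comp (e.symm.measurable.comp (measurable_prodMk_right (y := y)))).abs)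
              C (fun x => by simp [abs_abs, hC _]))
            (integrable_const C) (fun x => hC _)
        _ = C := by simp
    -- integrability of slices
    have hslice_int : ∀ y, Integrable (fun x => f (e.symm (x, y))) (ν 0) := fun y =>
      integrable_of_abs_bound _ _
        (hf.comp (e.symm.measurable.comp (measurable_prodMk_right (y := y)))) C (fun x => hC _)
    -- key coordinate identities
    have hupd0 : ∀ (x x' : Z 0) (y : ∀ j : Fin n, Z (Fin.succAbove 0 j)),
        e.symm (x', y) = Function.update (e.symm (x, y)) 0 x' := by
      intro x x' y
      rw [hesymm, hesymm, Fin.update_insertNth]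
    have hupdj : ∀ (x : Z 0) (y : ∀ j : Fin n, Z (Fin.succAbove 0 j)) (j : Fin n)
        (w : Z (Fin.succAbove 0 j)),
        e.symm (x, Function.update y j w)
          = Function.update (e.symm (x, y)) (Fin.succAbove 0 j) w := by
      intro x y j w
      rw [hesymm, hesymm, insertNth_update]
    -- F has bounded differences
    have hFbdiff : ∀ (j : Fin n) (y : ∀ j' : Fin n, Z (Fin.succAbove 0 j'))
        (w : Z (Fin.succAbove 0 j)),
        |F y - F (Function.update y j w)| ≤ L (Fin.succAbove 0 j) := by
      intro j y w
      have hdiff : F y - F (Function.update y j w)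
          = ∫ x, (f (e.symm (x, y)) - f (e.symm (x, Function.update y j w))) ∂(ν 0) := by
        rw [integral_sub (hslice_int y) (hslice_int _)]
      rw [hdiff]
      calc |∫ x, (f (e.symm (x, y)) - f (e.symm (x, Function.update y j w))) ∂(ν 0)|
          ≤ ∫ x, |f (e.symm (x, y)) - f (e.symm (x, Function.update y j w))| ∂(ν 0) := by
            simpa [Real.norm_eq_abs] using norm_integral_le_integral_norm
              (f := fun x => f (e.symm (x, y)) - f (e.symm (x, Function.update y j w)))
              (μ := ν 0)
        _ ≤ ∫ _x, L (Fin.succAbove 0 j) ∂(ν 0) := by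
            refine integral_mono (((hslice_int y).sub (hslice_int _)).abs)
              (integrable_const _) (fun x => ?_)
            rw [hupdj x y j w]
            exact hbd _ _ _
        _ = L (Fin.succAbove 0 j) := by simp
    -- the mean of F is m
    have hFmean : ∫ y, F y ∂(Measure.pi ν') = m := by
      rw [hm, htrans f hf, integral_prod_symm _
        (integrable_of_abs_bound _ _ hgmeas C (fun q => hC _))]
    -- integrand over the product
    have hintegrand_meas : Measurable (fun q : Z 0 × (∀ j : Fin n, Z (Fin.succAbove 0 j)) =>
        Real.exp (t * (f (e.symm q) - m))) :=
      Real.measurable_exp.comp (((hgmeas.sub measurable_const)).const_mul t)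
    have hintegrand_bd : ∀ q : Z 0 × (∀ j : Fin n, Z (Fin.succAbove 0 j)),
        |Real.exp (t * (f (e.symm q) - m))| ≤ Real.exp (|t| * (2 * C)) := by
      intro q
      rw [abs_of_pos (Real.exp_pos _)]
      refine Real.exp_le_exp.2 ?_
      calc t * (f (e.symm q) - m) ≤ |t * (f (e.symm q) - m)| := le_abs_self _
        _ = |t| * |f (e.symm q) - m| := abs_mul _ _
        _ ≤ |t| * (2 * C) := by
            refine mul_le_mul_of_nonneg_left ?_ (abs_nonneg t)
            calc |f (e.symm q) - m| ≤ |f (e.symm q)| + |m| := abs_sub _ _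
              _ ≤ C + C := add_le_add (hC _) habsm
              _ = 2 * C := by ring
    -- main computation
    rw [htrans (fun z => Real.exp (t * (f z - m)))
      (Real.measurable_exp.comp ((hf.sub measurable_const).const_mul t))]
    rw [integral_prod_symm _ (integrable_of_abs_bound _ _ hintegrand_meas _ hintegrand_bd)]
    -- inner Hoeffding bound pointwise in y
    have hC0 : 0 ≤ C := le_trans (abs_nonneg _) habsm
    have hinner : ∀ y, ∫ x, Real.exp (t * (f (e.symm (x, y)) - m)) ∂(ν 0)
        ≤ Real.exp (t ^ 2 * (L 0) ^ 2 / 8) * Real.exp (t * (F y - m)) := by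
      intro y
      have hsplit : (fun x => Real.exp (t * (f (e.symm (x, y)) - m)))
          = fun x => Real.exp (t * (f (e.symm (x, y)) - F y)) * Real.exp (t * (F y - m)) := by
        funext x; rw [← Real.exp_add]; ring_nf
      rw [hsplit, integral_mul_const]
      refine mul_le_mul_of_nonneg_right ?_ (Real.exp_pos _).le
      have hosc : ∀ x x' : Z 0,
          |f (e.symm (x, y)) - f (e.symm (x', y))| ≤ L 0 := by
        intro x x'
        rw [hupd0 x x' y]
        exact hbd 0 _ _
      have := hoeffding_mgf (ν 0) (fun x => f (e.symm (x, y)))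
        (hf.comp (e.symm.measurable.comp (measurable_prodMk_right (y := y)))) (L 0) hosc t
      exact this
    -- outer integral
    have houter_meas : Measurable (fun y => ∫ x, Real.exp (t * (f (e.symm (x, y)) - m)) ∂(ν 0)) := by
      have := (hintegrand_meas.stronglyMeasurable).integral_prod_left' (μ := ν 0)
      exact this.measurable
    have houter_bd : ∀ y, |∫ x, Real.exp (t * (f (e.symm (x, y)) - m)) ∂(ν 0)|
        ≤ Real.exp (|t| * (2 * C)) := by
      intro y
      calc |∫ x, Real.exp (t * (f (e.symm (x, y)) - m)) ∂(ν 0)|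
          ≤ ∫ x, |Real.exp (t * (f (e.symm (x, y)) - m))| ∂(ν 0) := by
            simpa [Real.norm_eq_abs] using norm_integral_le_integral_norm
              (f := fun x => Real.exp (t * (f (e.symm (x, y)) - m))) (μ := ν 0)
        _ ≤ ∫ _x, Real.exp (|t| * (2 * C)) ∂(ν 0) := integral_mono
            (integrable_of_abs_bound _ _ ((hintegrand_meas.comp
              (measurable_prodMk_right (y := y))).abs) _
              (fun x => by rw [abs_abs]; exact hintegrand_bd (x, y)))
            (integrable_const _) (fun x => hintegrand_bd (x, y))
        _ = Real.exp (|t| * (2 * C)) := by simp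
    have hrhs_meas : Measurable (fun y => Real.exp (t ^ 2 * (L 0) ^ 2 / 8)
        * Real.exp (t * (F y - m))) :=
      (Real.measurable_exp.comp ((hFmeas.sub measurable_const).const_mul t)).const_mul _
    have hrhs_bd : ∀ y, |Real.exp (t ^ 2 * (L 0) ^ 2 / 8) * Real.exp (t * (F y - m))|
        ≤ Real.exp (t ^ 2 * (L 0) ^ 2 / 8) * Real.exp (|t| * (2 * C)) := by
      intro y
      rw [abs_of_pos (by positivity)]
      refine mul_le_mul_of_nonneg_left ?_ (Real.exp_pos _).le
      refine Real.exp_le_exp.2 ?_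
      calc t * (F y - m) ≤ |t * (F y - m)| := le_abs_self _
        _ = |t| * |F y - m| := abs_mul _ _
        _ ≤ |t| * (2 * C) := by
            refine mul_le_mul_of_nonneg_left ?_ (abs_nonneg t)
            calc |F y - m| ≤ |F y| + |m| := abs_sub _ _
              _ ≤ C + C := add_le_add (hFbd _) habsm
              _ = 2 * C := by ring
    have hmono := integral_mono
      (integrable_of_abs_bound (Measure.pi ν') _ houter_meas _ houter_bd)
      (integrable_of_abs_bound (Measure.pi ν') _ hrhs_meas _ hrhs_bd)
      hinner
    refine hmono.trans ?_
    rw [integral_const_mul]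
    -- apply the induction hypothesis to F
    have hIH := IH (fun j => Z (Fin.succAbove 0 j)) (fun j => mZ _) ν'
      (fun j => hν _) F hFmeas C hFbd (fun j => L (Fin.succAbove 0 j)) 
      (fun j y w => hFbdiff j y w) t
    rw [hFmean] at hIH
    calc Real.exp (t ^ 2 * (L 0) ^ 2 / 8) * ∫ y, Real.exp (t * (F y - m)) ∂(Measure.pi ν')
        ≤ Real.exp (t ^ 2 * (L 0) ^ 2 / 8)
          * Real.exp (t ^ 2 / 8 * ∑ j : Fin n, (L (Fin.succAbove 0 j)) ^ 2) :=
          mul_le_mul_of_nonneg_left hIH (Real.exp_pos _).le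
      _ = Real.exp (t ^ 2 / 8 * ∑ ℓ : Fin (n + 1), (L ℓ) ^ 2) := by
          rw [← Real.exp_add, Fin.sum_univ_succAbove (fun ℓ => (L ℓ) ^ 2) 0]
          congr 1
          ring


lemma osc_le {n : ℕ} {Z : Fin n → Type} (f : (∀ i, Z i) → ℝ) (L : Fin n → ℝ)
    (hbd : ∀ (ℓ : Fin n) (z : ∀ i, Z i) (z' : Z ℓ), |f z - f (Function.update z ℓ z')| ≤ L ℓ)
    (hL0 : ∀ i, 0 ≤ L i) :
    ∀ (s : Finset (Fin n)) (z w : ∀ i, Z i), (∀ i, z i ≠ w i → i ∈ s) →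
      |f z - f w| ≤ ∑ i ∈ s, L i := by
  intro s
  induction s using Finset.induction_on with
  | empty =>
    intro z w h
    have : z = w := funext fun i => by_contra fun hc => absurd (h i hc) (Finset.notMem_empty i)
    simp [this]
  | @insert a s ha IH =>
    intro z w h
    set z' := Function.update z a (w a) with hz'
    have h1 : |f z - f z'| ≤ L a := hbd a z (w a)
    have h2 : |f z' - f w| ≤ ∑ i ∈ s, L i := by
      refine IH z' w fun i hi => ?_
      by_cases hia : i = a
      · subst hia
        exact absurd (by simp [hz']) hi
      · have : z i ≠ w i := by
          rw [hz'] at hi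
          rwa [Function.update_of_ne hia] at hi
        rcases Finset.mem_insert.1 (h i this) with h' | h'
        · exact absurd h' hia
        · exact h'
    calc |f z - f w| ≤ |f z - f z'| + |f z' - f w| := abs_sub_le _ _ _
      _ ≤ L a + ∑ i ∈ s, L i := add_le_add h1 h2
      _ = ∑ i ∈ insert a s, L i := (Finset.sum_insert ha).symm


end McDiarmidAux

/-- PAC-Bayes-style bounded differences MGF bound / Hoeffding MGF form
of McDiarmid's inequality.
If `f` has the bounded differences property with constants `L_ℓ` and `W_1,…,W_n` are
independent random variables, then for every `t ∈ ℝ`,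
`E exp(t(f(W) − E f(W))) ≤ exp((t²/8) ∑ L_ℓ²)`. -/
theorem bounded_differences_mgf
    (n : ℕ) (Z : Fin n → Type) [∀ i, MeasurableSpace (Z i)]
    (f : (∀ i, Z i) → ℝ) (hf : Measurable f)
    (L : Fin n → ℝ)
    (hbd : ∀ (ℓ : Fin n) (z : ∀ i, Z i) (z' : Z ℓ),
      |f z - f (Function.update z ℓ z')| ≤ L ℓ)
    (Ω : Type) [MeasurableSpace Ω] (μ : Measure Ω) [IsProbabilityMeasure μ]
    (W : ∀ i, Ω → Z i) (hW : ∀ i, Measurable (W i))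
    (hindep : ProbabilityTheory.iIndepFun W μ)
    (hint : Integrable (fun ω => f fun i => W i ω) μ)
    (t : ℝ) :
    (∫ ω, Real.exp (t * (f (fun i => W i ω) - ∫ ω', f fun i => W i ω' ∂μ)) ∂μ)
      ≤ Real.exp (t ^ 2 / 8 * ∑ ℓ : Fin n, (L ℓ) ^ 2) := by
  -- Ω is nonempty
  rcases isEmpty_or_nonempty Ω with hE | hNE
  · have h1 : μ Set.univ = 1 := measure_univ
    rw [Set.univ_eq_empty_iff.2 hE, measure_empty] at h1
    exact absurd h1 zero_ne_one
  obtain ⟨ω₀⟩ := hNE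
  -- the joint map
  set ι : Ω → ∀ i, Z i := fun ω i => W i ω with hι
  have hιmeas : Measurable ι := measurable_pi_lambda ι hW
  set ν : ∀ i, Measure (Z i) := fun i => μ.map (W i) with hν
  haveI : ∀ i, IsProbabilityMeasure (ν i) := fun i =>
    Measure.isProbabilityMeasure_map (hW i).aemeasurable
  -- joint law equals product measure
  have hmap : μ.map ι = Measure.pi ν := by
    refine (Measure.pi_eq fun s hs => ?_).symm
    rw [Measure.map_apply hιmeas (MeasurableSet.univ_pi hs)]
    have hpre : ι ⁻¹' Set.pi Set.univ s = ⋂ i ∈ Finset.univ, W i ⁻¹' s i := by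
      ext ω
      simp [hι, Set.mem_pi]
    rw [hpre, hindep.measure_inter_preimage_eq_mul Finset.univ (fun i _ => hs i)]
    refine Finset.prod_congr rfl fun i _ => ?_
    rw [hν, Measure.map_apply (hW i) (hs i)]
  -- nonnegativity of L and boundedness of f
  have hL0 : ∀ ℓ, 0 ≤ L ℓ := by
    intro ℓ
    have := hbd ℓ (fun i => W i ω₀) (W ℓ ω₀)
    rwa [Function.update_eq_self, sub_self, abs_zero] at this
  set z₀ : ∀ i, Z i := fun i => W i ω₀ with hz₀
  set C : ℝ := |f z₀| + ∑ i, L i with hCdef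
  have hC : ∀ z, |f z| ≤ C := by
    intro z
    have := osc_le f L hbd hL0 Finset.univ z z₀ (fun i _ => Finset.mem_univ i)
    calc |f z| = |f z - f z₀ + f z₀| := by ring_nf
      _ ≤ |f z - f z₀| + |f z₀| := abs_add_le _ _
      _ ≤ ∑ i, L i + |f z₀| := add_le_add this le_rfl
      _ = C := by rw [hCdef]; ring
  -- transfer integrals
  have htrans : ∀ (g : (∀ i, Z i) → ℝ), Measurable g →
      ∫ ω, g (ι ω) ∂μ = ∫ z, g z ∂(Measure.pi ν) := by
    intro g hg
    rw [← hmap, integral_map hιmeas.aemeasurable hg.aestronglyMeasurable]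
  have hmean : ∫ ω', f (fun i => W i ω') ∂μ = ∫ z', f z' ∂(Measure.pi ν) := htrans f hf
  rw [show (fun ω => Real.exp (t * (f (fun i => W i ω) - ∫ ω', f fun i => W i ω' ∂μ)))
      = fun ω => Real.exp (t * (f (ι ω) - ∫ z', f z' ∂(Measure.pi ν))) by
    funext ω; rw [hmean]]
  rw [htrans (fun z => Real.exp (t * (f z - ∫ z', f z' ∂(Measure.pi ν))))
    (Real.measurable_exp.comp ((hf.sub measurable_const).const_mul t))]
  exact pi_mgf n Z _ ν inferInstance f hf C hC L hbd t
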